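/- Suppose η > 0 satisfies 2η λ_max(AᵀA) ≤ 1, and let u* ∈ ℝ^{Nn} with u* ≥ 0 and Du* = 0. Then for every u ∈ ℝ^{Nn}, Q(u;η) − F(u*) ≥ f(u) − f(u*) − ‖Aᵀ(Db)‖ · ‖Du‖. -/

import Mathlib

open scoped BigOperators InnerProductSpace

noncomputable section

/-- Block space `ℝ^{Nn}` with `N = K+1` blocks of size `n`, with the Euclidean norm. -/
abbrev Blk (K n : ℕ) : Type := PiLp 2 fun _ : Fin (K + 1) => EuclideanSpace ℝ (Fin n)

/-- `Dmap c w = w_N − Σ_{i=1}^{N−1} c_i w_i`. -/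
def Dmap {K n : ℕ} (c : Fin K → ℝ) (w : Blk K n) : EuclideanSpace ℝ (Fin n) :=
  w (Fin.last K) - ∑ i : Fin K, c i • w i.castSucc

/-- `f(w) = Σ_i ‖A w_i − b_i‖²`. -/
def fobj {K m n : ℕ} (A : Matrix (Fin m) (Fin n) ℝ) (b : Blk K m) (w : Blk K n) : ℝ :=
  ∑ i : Fin (K + 1), ‖Matrix.toEuclideanLin A (w i) - b i‖ ^ 2

/-- `F(w) = f(w) − (1/2)‖A(Dw) − Db‖²`. -/
def Fobj {K m n : ℕ} (A : Matrix (Fin m) (Fin n) ℝ) (b : Blk K m) (c : Fin K → ℝ)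
    (w : Blk K n) : ℝ :=
  fobj A b w - (1 / 2) * ‖Matrix.toEuclideanLin A (Dmap c w) - Dmap c b‖ ^ 2

/-- The quadratic penalty function `Q(w;η) = F(w) + (1/(4η))‖Dw‖²`. -/
def Qpen {K m n : ℕ} (A : Matrix (Fin m) (Fin n) ℝ) (b : Blk K m) (c : Fin K → ℝ)
    (η : ℝ) (w : Blk K n) : ℝ :=
  Fobj A b c w + (1 / (4 * η)) * ‖Dmap c w‖ ^ 2

/-- The adjoint `Dᵀ` of `Dmap`, given blockwise by `(Dᵀu)_i = −c_i u` for `i < N` and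
`(Dᵀu)_N = u`. -/
def DmapT {K n : ℕ} (c : Fin K → ℝ) (u : EuclideanSpace ℝ (Fin n)) : Blk K n :=
  WithLp.toLp 2 (Fin.snoc (fun i : Fin K => -(c i) • u) u)

lemma rayleigh_bd {m n : ℕ} (A : Matrix (Fin m) (Fin n) ℝ) (lam : ℝ)
    (hlam : ∀ μ ∈ spectrum ℝ (A.transpose * A), μ ≤ lam)
    (v : EuclideanSpace ℝ (Fin n)) :
    ‖Matrix.toEuclideanLin A v‖ ^ 2 ≤ lam * ‖v‖ ^ 2 := by
  have hH : (A.transpose * A).IsHermitian := by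
    simpa [Matrix.conjTranspose_eq_transpose_of_trivial] using Matrix.isHermitian_conjTranspose_mul_self A
  have hT : (Matrix.toEuclideanLin (A.transpose * A)).IsSymmetric :=
    Matrix.isHermitian_iff_isSymmetric.mp hH
  set T := Matrix.toEuclideanLin (A.transpose * A) with hTdef
  have hcomp : T v = Matrix.toEuclideanLin A.transpose (Matrix.toEuclideanLin A v) := by
    simp [hTdef, Matrix.toEuclideanLin_apply, Matrix.mulVec_mulVec]
  have hadj : Matrix.toEuclideanLin A.transpose
      = LinearMap.adjoint (Matrix.toEuclideanLin A) := by
    rw [← Matrix.toEuclideanLin_conjTranspose_eq_adjoint,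
      Matrix.conjTranspose_eq_transpose_of_trivial]
  have key : ⟪T v, v⟫_ℝ = ‖Matrix.toEuclideanLin A v‖ ^ 2 := by
    rw [hcomp, hadj, LinearMap.adjoint_inner_left, real_inner_self_eq_norm_sq]
  have hn : Module.finrank ℝ (EuclideanSpace ℝ (Fin n)) = n := finrank_euclideanSpace_fin
  set B := hT.eigenvectorBasis hn with hB
  have hmem : ∀ i, hT.eigenvalues hn i ≤ lam := by
    intro i
    apply hlam
    rw [← Matrix.spectrum_toEuclideanLin]
    exact (hT.hasEigenvalue_eigenvalues hn i).mem_spectrum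
  have h1 : ⟪T v, v⟫_ℝ = ∑ i, hT.eigenvalues hn i * (B.repr v i) ^ 2 := by
    rw [← B.repr.inner_map_map (T v) v]
    simp only [PiLp.inner_apply, RCLike.inner_apply, conj_trivial]
    refine Finset.sum_congr rfl fun i _ => ?_
    rw [hT.eigenvectorBasis_apply_self_apply hn v i, RCLike.ofReal_real_eq_id]
    simp [sq]
    ring
  have h2 : ‖v‖ ^ 2 = ∑ i, (B.repr v i) ^ 2 := by
    rw [← real_inner_self_eq_norm_sq, ← B.repr.inner_map_map v v]
    simp only [PiLp.inner_apply, RCLike.inner_apply, conj_trivial]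
    exact Finset.sum_congr rfl fun i _ => (sq (B.repr v i)).symm
  rw [← key, h1, h2, Finset.mul_sum]
  exact Finset.sum_le_sum fun i _ =>
    mul_le_mul_of_nonneg_right (hmem i) (sq_nonneg _)

/-- Lower bound on the penalty optimality gap: if `2η λ_max(AᵀA) ≤ 1` and `u* ≥ 0`
with `Du* = 0`, then `Q(u;η) − F(u*) ≥ f(u) − f(u*) − ‖Aᵀ(Db)‖‖Du‖` for all `u`. -/
theorem stmt18 {K m n : ℕ} (A : Matrix (Fin m) (Fin n) ℝ) (b : Blk K m)
    (c : Fin K → ℝ) (hc : ∀ i, 0 ≤ c i)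
    (lam : ℝ) (hlam : IsGreatest (spectrum ℝ (A.transpose * A)) lam)
    (η : ℝ) (hη0 : 0 < η) (hη : 2 * η * lam ≤ 1)
    (us : Blk K n) (hus0 : ∀ i j, 0 ≤ us i j) (husD : Dmap c us = 0) :
    ∀ u : Blk K n,
      fobj A b u - fobj A b us
          - ‖Matrix.toEuclideanLin A.transpose (Dmap c b)‖ * ‖Dmap c u‖
        ≤ Qpen A b c η u - Fobj A b c us := by
  intro u
  set d := Dmap c u with hd
  set e := Dmap c b with he
  have hFus : Fobj A b c us = fobj A b us - (1 / 2) * ‖e‖ ^ 2 := by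
    rw [Fobj, husD]
    simp [he]
  have h1 : ‖Matrix.toEuclideanLin A d‖ ^ 2 ≤ lam * ‖d‖ ^ 2 :=
    rayleigh_bd A lam (fun μ hμ => hlam.2 hμ) d
  have hadj : Matrix.toEuclideanLin A.transpose
      = LinearMap.adjoint (Matrix.toEuclideanLin A) := by
    rw [← Matrix.toEuclideanLin_conjTranspose_eq_adjoint,
      Matrix.conjTranspose_eq_transpose_of_trivial]
  have h3 : ⟪Matrix.toEuclideanLin A d, e⟫_ℝ = ⟪d, Matrix.toEuclideanLin A.transpose e⟫_ℝ := by
    rw [hadj, LinearMap.adjoint_inner_right]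
  have h4 : -(‖d‖ * ‖Matrix.toEuclideanLin A.transpose e‖)
      ≤ ⟪d, Matrix.toEuclideanLin A.transpose e⟫_ℝ :=
    neg_abs_le _ |>.trans' (by
      have := abs_real_inner_le_norm d (Matrix.toEuclideanLin A.transpose e)
      linarith [neg_le_neg this])
  have h5 : ‖Matrix.toEuclideanLin A d - e‖ ^ 2
      = ‖Matrix.toEuclideanLin A d‖ ^ 2 - 2 * ⟪Matrix.toEuclideanLin A d, e⟫_ℝ + ‖e‖ ^ 2 :=
    norm_sub_sq_real _ _
  have hd2 : (0:ℝ) ≤ ‖d‖ ^ 2 := sq_nonneg _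
  have hηd : ‖Matrix.toEuclideanLin A d‖ ^ 2 ≤ (1 / (2 * η)) * ‖d‖ ^ 2 := by
    refine h1.trans ?_
    rw [div_mul_eq_mul_div, le_div_iff₀ (by positivity)]
    nlinarith [mul_le_mul_of_nonneg_right hη hd2]
  rw [Qpen, Fobj, hFus]
  have hinv0 : (1:ℝ) / (4 * η) = (1/2) * (1 / (2 * η)) := by
    rw [mul_one_div, div_div]
    ring
  have hinv : (1 / (4 * η)) * ‖d‖ ^ 2 = (1/2) * ((1 / (2 * η)) * ‖d‖ ^ 2) := by
    rw [hinv0]; ring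
  rw [h3] at h5
  nlinarith [h4, h5, hηd, hinv]
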